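/- Let B be a K_4-free graph on h vertices and let T be a complete (r-2)-partite graph on n - h vertices (r ≥ 3) into each of whose classes a triangle-free graph has been placed. Let G be the join of B with T (every vertex of B adjacent to every vertex of T, keeping all internal edges). Then G is K_{2r}-free. -/

import Mathlib

/-- The join of two vertex-disjoint graphs: keep all internal edges and add all
edges between the two parts. -/
def graphJoin {α β : Type*} (B : SimpleGraph α) (T : SimpleGraph β) :
    SimpleGraph (α ⊕ β) where
  Adj x y := match x, y with
    | .inl a, .inl b => B.Adj a b
    | .inr a, .inr b => T.Adj a b
    | .inl _, .inr _ => True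
    | .inr _, .inl _ => True
  symm := by
    refine ⟨?_⟩
    rintro (a | a) (b | b) h
    · exact B.symm.symm _ _ h
    · trivial
    · trivial
    · exact T.symm.symm _ _ h
  loopless := by
    refine ⟨?_⟩
    rintro (a | a) h
    · exact B.loopless.irrefl a h
    · exact T.loopless.irrefl a h

lemma clique_card_lt_of_cliqueFree {α : Type*} {G : SimpleGraph α} {n : ℕ}
    (h : G.CliqueFree n) {s : Finset α} (hs : G.IsClique s) : s.card < n := by
  by_contra hc
  push_neg at hc
  obtain ⟨t, hsub, hcard⟩ := Finset.exists_subset_card_eq hc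
  exact h t ⟨hs.subset (by exact_mod_cast hsub), hcard⟩

/-- If `B` is a `K_4`-free graph on `h` vertices and `T` is a complete
`(r-2)`-partite graph (`r ≥ 3`) into each of whose classes a triangle-free graph
has been placed, then the join of `B` and `T` is `K_{2r}`-free. -/
theorem join_K4free_with_multipartite_K2r_free
    {β : Type*} [Fintype β] (r h : ℕ) (hr : 3 ≤ r)
    (B : SimpleGraph (Fin h)) (hB : B.CliqueFree 4)
    (T : SimpleGraph β) (f : β → Fin (r - 2))
    (hcross : ∀ u v : β, f u ≠ f v → T.Adj u v)
    (hparts : ∀ i : Fin (r - 2), (T.induce {v : β | f v = i}).CliqueFree 3) :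
    (graphJoin B T).CliqueFree (2 * r) := by
  intro t ht
  obtain ⟨hclique, hcard⟩ := ht
  -- left part is a clique in B
  have hBclique : B.IsClique t.toLeft := by
    intro a ha b hb hab
    have := hclique (by simpa using ha) (by simpa using hb)
      (by simpa using hab)
    exact this
  have hBle : t.toLeft.card ≤ 3 :=
    Nat.lt_succ_iff.mp (clique_card_lt_of_cliqueFree hB hBclique)
  -- right part is a clique in T
  have hTclique : T.IsClique t.toRight := by
    intro a ha b hb hab
    have := hclique (by simpa using ha) (by simpa using hb)
      (by simpa using hab)
    exact this
  -- each fiber has card ≤ 2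
  have hfiber : ∀ i : Fin (r - 2), ((t.toRight).filter (fun v => f v = i)).card ≤ 2 := by
    intro i
    by_contra hc
    push_neg at hc
    obtain ⟨s', hsub, hcard3⟩ :=
      Finset.exists_subset_card_eq (Nat.succ_le_of_lt hc)
    classical
    obtain ⟨a, b, c, hab, hac, hbc, hs⟩ := Finset.card_eq_three.mp hcard3
    rw [hs] at hsub
    have ha := hsub (show a ∈ ({a, b, c} : Finset β) by simp)
    have hb := hsub (show b ∈ ({a, b, c} : Finset β) by simp)
    have hc' := hsub (show c ∈ ({a, b, c} : Finset β) by simp)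
    simp only [Finset.mem_filter] at ha hb hc'
    have ha' : a ∈ {v : β | f v = i} := ha.2
    have hb' : b ∈ {v : β | f v = i} := hb.2
    have hc'' : c ∈ {v : β | f v = i} := hc'.2
    refine hparts i {⟨a, ha'⟩, ⟨b, hb'⟩, ⟨c, hc''⟩} ⟨?_, ?_⟩
    · intro x hx y hy hxy
      simp only [Finset.coe_insert, Set.mem_insert_iff, Finset.coe_singleton,
        Finset.mem_coe, Finset.mem_insert, Finset.mem_singleton] at hx hy
      have adj : ∀ u v : β, u ∈ t.toRight → v ∈ t.toRight → u ≠ v → T.Adj u v :=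
        fun u v hu hv huv => hTclique hu hv huv
      rcases hx with rfl | rfl | rfl <;> rcases hy with rfl | rfl | rfl <;>
        first
          | exact absurd rfl hxy
          | exact adj _ _ ha.1 hb.1 hab
          | exact adj _ _ ha.1 hc'.1 hac
          | exact adj _ _ hb.1 ha.1 (Ne.symm hab)
          | exact adj _ _ hb.1 hc'.1 hbc
          | exact adj _ _ hc'.1 ha.1 (Ne.symm hac)
          | exact adj _ _ hc'.1 hb.1 (Ne.symm hbc)
    · rw [Finset.card_insert_of_notMem, Finset.card_insert_of_notMem,
        Finset.card_singleton] <;> simp [Subtype.ext_iff, hab, hac, hbc]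
  -- sum over fibers
  have hsum : t.toRight.card = ∑ i : Fin (r - 2), ((t.toRight).filter (fun v => f v = i)).card :=
    Finset.card_eq_sum_card_fiberwise (fun v _ => Finset.mem_univ (f v))
  have hTle : t.toRight.card ≤ 2 * (r - 2) := by
    rw [hsum]
    calc ∑ i : Fin (r - 2), ((t.toRight).filter (fun v => f v = i)).card
        ≤ ∑ _i : Fin (r - 2), 2 := Finset.sum_le_sum (fun i _ => hfiber i)
      _ = (r - 2) * 2 := by simp [Finset.sum_const, Finset.card_univ]
      _ = 2 * (r - 2) := Nat.mul_comm _ _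
  have htot : t.toLeft.card + t.toRight.card = t.card := Finset.card_toLeft_add_card_toRight
  omega
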